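/- Let A be a k-linear abelian category, G a finite group, and H ≤ G with |G:H| invertible in k. Then the functor Triv_G is a direct summand of Triv_H ∘ Res^G_H as functors Rep(G,A) → A. -/

import Mathlib

open CategoryTheory CategoryTheory.Limits

universe v u

/-- The category `Rep(G, A)` of `G`-objects in a category `A`, i.e. functors `G → A`
where the group `G` is viewed as a one-object category. -/
abbrev GRep (A : Type u) [Category.{v} A] (G : Type*) [Monoid G] := SingleObj G ⥤ A

/-- The embedding `A → Rep(G, A)` equipping an object with the trivial `G`-action. -/
abbrev trivialRep (A : Type u) [Category.{v} A] (G : Type*) [Monoid G] :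
    A ⥤ GRep A G :=
  Functor.const (SingleObj G)

/-- Restriction `Rep(G, A) → Rep(H, A)` along a monoid homomorphism `f : H →* G`. -/
def resHom (A : Type u) [Category.{v} A] {G H : Type*} [Monoid G] [Monoid H] (f : H →* G) :
    GRep A G ⥤ GRep A H :=
  (Functor.whiskeringLeft _ _ A).obj (SingleObj.mapHom H G f)

namespace Stmt6Aux

variable {A : Type u} [Category.{v} A] {M : Type*} [Monoid M]

/-- An element of `M` as an endomorphism of the single object. -/
abbrev hom (g : M) : SingleObj.star M ⟶ SingleObj.star M := g

lemma map_mul_comp (X : GRep A M) (a b : M) :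
    X.map (hom a) ≫
      X.map (hom b) =
      X.map (hom (b * a)) := by
  rw [← X.map_comp]; rfl

section Inv

variable (inv : GRep A M ⥤ A) (adj : trivialRep A M ⊣ inv)

def ev (X : GRep A M) : inv.obj X ⟶ X.obj (SingleObj.star M) :=
  (adj.counit.app X).app (SingleObj.star M)

lemma ev_comp (X : GRep A M) (g : M) :
    ev inv adj X ≫ X.map (hom g) = ev inv adj X := by
  have h := (adj.counit.app X).naturality (X := SingleObj.star M) (Y := SingleObj.star M) g
  simpa [ev] using h.symm

def constHom (X : GRep A M) {a : A} (f : a ⟶ X.obj (SingleObj.star M))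
    (hf : ∀ g : M, f ≫ X.map (hom g) = f) :
    (trivialRep A M).obj a ⟶ X where
  app _ := f
  naturality _ _ g := by simpa using (hf g).symm

def lift (X : GRep A M) {a : A} (f : a ⟶ X.obj (SingleObj.star M))
    (hf : ∀ g : M, f ≫ X.map (hom g) = f) :
    a ⟶ inv.obj X :=
  adj.homEquiv a X (constHom X f hf)

lemma lift_ev (X : GRep A M) {a : A} (f : a ⟶ X.obj (SingleObj.star M)) (hf) :
    lift inv adj X f hf ≫ ev inv adj X = f := by
  have h := (adj.homEquiv a X).symm_apply_apply (constHom X f hf)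
  rw [Adjunction.homEquiv_counit] at h
  have h2 := congrArg (fun t => NatTrans.app t (SingleObj.star M)) h
  simpa [ev, lift, constHom] using h2

lemma hom_ext_inv (X : GRep A M) {a : A} {t₁ t₂ : a ⟶ inv.obj X}
    (h : t₁ ≫ ev inv adj X = t₂ ≫ ev inv adj X) : t₁ = t₂ := by
  apply (adj.homEquiv a X).symm.injective
  ext x
  cases x
  rw [Adjunction.homEquiv_counit, Adjunction.homEquiv_counit]
  simp [ev] at h ⊢
  exact h

end Inv

section Coinv

variable (coinv : GRep A M ⥤ A) (adj : coinv ⊣ trivialRep A M)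

def coev (X : GRep A M) : X.obj (SingleObj.star M) ⟶ coinv.obj X :=
  (adj.unit.app X).app (SingleObj.star M)

lemma comp_coev (X : GRep A M) (g : M) :
    X.map (hom g) ≫ coev coinv adj X = coev coinv adj X := by
  have h := (adj.unit.app X).naturality (X := SingleObj.star M) (Y := SingleObj.star M) g
  simpa [coev] using h

def constHom' (X : GRep A M) {a : A} (f : X.obj (SingleObj.star M) ⟶ a)
    (hf : ∀ g : M, X.map (hom g) ≫ f = f) :
    X ⟶ (trivialRep A M).obj a where
  app _ := f
  naturality _ _ g := by simpa using hf g

def colift (X : GRep A M) {a : A} (f : X.obj (SingleObj.star M) ⟶ a)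
    (hf : ∀ g : M, X.map (hom g) ≫ f = f) :
    coinv.obj X ⟶ a :=
  (adj.homEquiv X a).symm (constHom' X f hf)

lemma coev_colift (X : GRep A M) {a : A} (f : X.obj (SingleObj.star M) ⟶ a) (hf) :
    coev coinv adj X ≫ colift coinv adj X f hf = f := by
  have h := (adj.homEquiv X a).apply_symm_apply (constHom' X f hf)
  rw [Adjunction.homEquiv_unit] at h
  have h2 := congrArg (fun t => NatTrans.app t (SingleObj.star M)) h
  simpa [coev, colift, constHom'] using h2

lemma hom_ext_coinv (X : GRep A M) {a : A} {t₁ t₂ : coinv.obj X ⟶ a}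
    (h : coev coinv adj X ≫ t₁ = coev coinv adj X ≫ t₂) : t₁ = t₂ := by
  apply (adj.homEquiv X a).injective
  ext x
  cases x
  rw [Adjunction.homEquiv_unit, Adjunction.homEquiv_unit]
  simp [coev] at h ⊢
  exact h

end Coinv


section Cosets

variable {G : Type*} [Group G] (H : Subgroup G)

lemma exists_coset_rep (g₀ : G) (q : G ⧸ H) :
    ∃ h : H, g₀ * q.out = (g₀ • q).out * (h : G) := by
  have h1 : (QuotientGroup.mk ((g₀ • q).out) : G ⧸ H) = QuotientGroup.mk (g₀ * q.out) := by
    rw [QuotientGroup.out_eq']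
    exact (MulAction.Quotient.mk_smul_out H g₀ q).symm
  have h2 : ((g₀ • q).out)⁻¹ * (g₀ * q.out) ∈ H := QuotientGroup.eq.mp h1
  exact ⟨⟨_, h2⟩, by group⟩

lemma exists_coset_rep_inv (g₀ : G) (q : G ⧸ H) :
    ∃ h : H, q.out⁻¹ * g₀ = (h : G) * ((g₀⁻¹ • q).out)⁻¹ := by
  obtain ⟨h, hh⟩ := exists_coset_rep H g₀⁻¹ q
  refine ⟨h⁻¹, ?_⟩
  have := congrArg (·⁻¹) hh
  simp only [mul_inv_rev, inv_inv] at this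
  simpa using this

end Cosets

section Main

variable {k : Type*} [Field k] {A : Type u} [Category.{v} A] [Abelian A] [Linear k A]
  {G : Type*} [Group G] [Finite G] {H : Subgroup G}
  (hindex : IsUnit ((H.index : k)))
  (invG : GRep A G ⥤ A) (adjInvG : trivialRep A G ⊣ invG)
  (coinvG : GRep A G ⥤ A) (adjCoinvG : coinvG ⊣ trivialRep A G)
  (invH : GRep A H ⥤ A) (adjInvH : trivialRep A H ⊣ invH)
  (coinvH : GRep A H ⥤ A) (adjCoinvH : coinvH ⊣ trivialRep A H)

noncomputable local instance : Fintype (G ⧸ H) := Fintype.ofFinite _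

/-- sanity defeq checks -/
example (X : GRep A G) (h : H) :
    ((resHom A H.subtype).obj X).map (hom h) = X.map (hom (h : G)) := rfl

example (X : GRep A G) :
    ((resHom A H.subtype).obj X).obj (SingleObj.star H) = X.obj (SingleObj.star G) := rfl

example {X Y : GRep A G} (f : X ⟶ Y) :
    ((resHom A H.subtype).map f).app (SingleObj.star H) = f.app (SingleObj.star G) := rfl

lemma index_smul_cancel {a b : A} (f : a ⟶ b) :
    (↑hindex.unit⁻¹ : k) • ((Fintype.card (G ⧸ H) : ℕ) • f) = f := by
  rw [← Nat.cast_smul_eq_nsmul k, smul_smul,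
    show ((Fintype.card (G ⧸ H) : ℕ) : k) = ((H.index : ℕ) : k) by
      rw [Subgroup.index, Nat.card_eq_fintype_card]]
  have h1 : (↑hindex.unit⁻¹ * ((H.index : ℕ) : k)) = 1 := by
    calc (↑hindex.unit⁻¹ * ((H.index : ℕ) : k)) = ↑hindex.unit⁻¹ * ↑hindex.unit := by
          rw [hindex.unit_spec]
      _ = 1 := Units.inv_mul _
  rw [h1, one_smul]

/-- The averaged (transfer) map from `H`-invariants of `Res X` to `X`. -/
noncomputable def EInv (X : GRep A G) :
    invH.obj ((resHom A H.subtype).obj X) ⟶ X.obj (SingleObj.star G) :=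
  (↑hindex.unit⁻¹ : k) • ∑ q : G ⧸ H,
    (ev invH adjInvH ((resHom A H.subtype).obj X) ≫ X.map (hom q.out))

lemma EInv_comp (X : GRep A G) (g₀ : G) :
    EInv hindex invH adjInvH X ≫ X.map (hom g₀) = EInv hindex invH adjInvH X := by
  unfold EInv
  rw [Linear.smul_comp, Preadditive.sum_comp]
  congr 1
  have key : ∀ q : G ⧸ H,
      (ev invH adjInvH ((resHom A H.subtype).obj X) ≫ X.map (hom q.out)) ≫ X.map (hom g₀) =
      ev invH adjInvH ((resHom A H.subtype).obj X) ≫ X.map (hom (g₀ • q).out) := by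
    intro q
    obtain ⟨h, hh⟩ := exists_coset_rep H g₀ q
    calc (ev invH adjInvH ((resHom A H.subtype).obj X) ≫ X.map (hom q.out)) ≫ X.map (hom g₀)
        = ev invH adjInvH ((resHom A H.subtype).obj X) ≫ X.map (hom (g₀ * q.out)) := by
          erw [Category.assoc, map_mul_comp]
      _ = ev invH adjInvH ((resHom A H.subtype).obj X) ≫
            X.map (hom ((g₀ • q).out * (h : G))) := by rw [hh]
      _ = (ev invH adjInvH ((resHom A H.subtype).obj X) ≫ X.map (hom (h : G))) ≫
            X.map (hom (g₀ • q).out) := by erw [Category.assoc, map_mul_comp]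
      _ = ev invH adjInvH ((resHom A H.subtype).obj X) ≫ X.map (hom (g₀ • q).out) := by
          rw [show ev invH adjInvH ((resHom A H.subtype).obj X) ≫ X.map (hom (h : G)) =
            ev invH adjInvH ((resHom A H.subtype).obj X) from
            ev_comp invH adjInvH ((resHom A H.subtype).obj X) h]
          rfl
  rw [Finset.sum_congr rfl (fun q _ => key q)]
  exact Fintype.sum_equiv (MulAction.toPerm g₀) _ _ (fun q => rfl)

/-- The averaged (transfer) map from `X` to `H`-coinvariants of `Res X`. -/
noncomputable def FCo (X : GRep A G) :
    X.obj (SingleObj.star G) ⟶ coinvH.obj ((resHom A H.subtype).obj X) :=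
  (↑hindex.unit⁻¹ : k) • ∑ q : G ⧸ H,
    (X.map (hom q.out⁻¹) ≫ coev coinvH adjCoinvH ((resHom A H.subtype).obj X))

lemma comp_FCo (X : GRep A G) (g₀ : G) :
    X.map (hom g₀) ≫ FCo hindex coinvH adjCoinvH X = FCo hindex coinvH adjCoinvH X := by
  unfold FCo
  rw [Linear.comp_smul, Preadditive.comp_sum]
  congr 1
  have key : ∀ q : G ⧸ H,
      X.map (hom g₀) ≫ (X.map (hom q.out⁻¹) ≫
        coev coinvH adjCoinvH ((resHom A H.subtype).obj X)) =
      X.map (hom ((g₀⁻¹ • q).out)⁻¹) ≫ coev coinvH adjCoinvH ((resHom A H.subtype).obj X) := by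
    intro q
    obtain ⟨h, hh⟩ := exists_coset_rep_inv H g₀ q
    calc X.map (hom g₀) ≫ (X.map (hom q.out⁻¹) ≫
          coev coinvH adjCoinvH ((resHom A H.subtype).obj X))
        = X.map (hom (q.out⁻¹ * g₀)) ≫ coev coinvH adjCoinvH ((resHom A H.subtype).obj X) := by
          erw [← Category.assoc, map_mul_comp]
      _ = X.map (hom ((h : G) * ((g₀⁻¹ • q).out)⁻¹)) ≫
            coev coinvH adjCoinvH ((resHom A H.subtype).obj X) := by rw [hh]
      _ = X.map (hom ((g₀⁻¹ • q).out)⁻¹) ≫ (X.map (hom (h : G)) ≫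
            coev coinvH adjCoinvH ((resHom A H.subtype).obj X)) := by
          erw [← Category.assoc, map_mul_comp]
      _ = X.map (hom ((g₀⁻¹ • q).out)⁻¹) ≫
            coev coinvH adjCoinvH ((resHom A H.subtype).obj X) := by
          rw [show X.map (hom (h : G)) ≫ coev coinvH adjCoinvH ((resHom A H.subtype).obj X) =
            coev coinvH adjCoinvH ((resHom A H.subtype).obj X) from
            comp_coev coinvH adjCoinvH ((resHom A H.subtype).obj X) h]
  rw [Finset.sum_congr rfl (fun q _ => key q)]
  exact Fintype.sum_equiv (MulAction.toPerm g₀⁻¹) _ _ (fun q => rfl)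

end Main

section Main2

variable {k : Type*} [Field k] {A : Type u} [Category.{v} A] [Abelian A] [Linear k A]
  {G : Type*} [Group G] [Finite G] {H : Subgroup G}
  (hindex : IsUnit ((H.index : k)))
  (invG : GRep A G ⥤ A) (adjInvG : trivialRep A G ⊣ invG)
  (coinvG : GRep A G ⥤ A) (adjCoinvG : coinvG ⊣ trivialRep A G)
  (invH : GRep A H ⥤ A) (adjInvH : trivialRep A H ⊣ invH)
  (coinvH : GRep A H ⥤ A) (adjCoinvH : coinvH ⊣ trivialRep A H)

noncomputable local instance : Fintype (G ⧸ H) := Fintype.ofFinite _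

/-- Inclusion of `G`-invariants into `H`-invariants. -/
noncomputable def alphaApp (X : GRep A G) :
    invG.obj X ⟶ invH.obj ((resHom A H.subtype).obj X) :=
  lift invH adjInvH ((resHom A H.subtype).obj X) (ev invG adjInvG X)
    (fun h => ev_comp invG adjInvG X (h : G))

/-- Transfer from `H`-invariants to `G`-invariants. -/
noncomputable def tauApp (X : GRep A G) :
    invH.obj ((resHom A H.subtype).obj X) ⟶ invG.obj X :=
  lift invG adjInvG X (EInv hindex invH adjInvH X) (EInv_comp hindex invH adjInvH X)

/-- Projection from `H`-coinvariants onto `G`-coinvariants. -/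
noncomputable def mCo (X : GRep A G) :
    coinvH.obj ((resHom A H.subtype).obj X) ⟶ coinvG.obj X :=
  colift coinvH adjCoinvH ((resHom A H.subtype).obj X) (coev coinvG adjCoinvG X)
    (fun h => comp_coev coinvG adjCoinvG X (h : G))

/-- Transfer from `G`-coinvariants to `H`-coinvariants. -/
noncomputable def tcCo (X : GRep A G) :
    coinvG.obj X ⟶ coinvH.obj ((resHom A H.subtype).obj X) :=
  colift coinvG adjCoinvG X (FCo hindex coinvH adjCoinvH X) (comp_FCo hindex coinvH adjCoinvH X)

lemma ev_coev_H (X : GRep A G) :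
    ev invG adjInvG X ≫ coev coinvH adjCoinvH ((resHom A H.subtype).obj X) =
      ev invG adjInvG X ≫ coev coinvG adjCoinvG X ≫ tcCo hindex coinvG adjCoinvG coinvH adjCoinvH X := by
  rw [show coev coinvG adjCoinvG X ≫ tcCo hindex coinvG adjCoinvG coinvH adjCoinvH X =
    FCo hindex coinvH adjCoinvH X from coev_colift _ _ _ _ _]
  unfold FCo
  rw [Linear.comp_smul, Preadditive.comp_sum]
  have key : ∀ q : G ⧸ H,
      ev invG adjInvG X ≫ (X.map (hom q.out⁻¹) ≫
        coev coinvH adjCoinvH ((resHom A H.subtype).obj X)) =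
      ev invG adjInvG X ≫ coev coinvH adjCoinvH ((resHom A H.subtype).obj X) := by
    intro q
    erw [← Category.assoc, ev_comp]
  rw [Finset.sum_congr rfl (fun q _ => key q), Finset.sum_const, Finset.card_univ,
    index_smul_cancel hindex]

lemma EInv_coev (X : GRep A G) :
    EInv hindex invH adjInvH X ≫ coev coinvG adjCoinvG X =
      ev invH adjInvH ((resHom A H.subtype).obj X) ≫ coev coinvG adjCoinvG X := by
  unfold EInv
  rw [Linear.smul_comp, Preadditive.sum_comp]
  have key : ∀ q : G ⧸ H,
      (ev invH adjInvH ((resHom A H.subtype).obj X) ≫ X.map (hom q.out)) ≫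
        coev coinvG adjCoinvG X =
      ev invH adjInvH ((resHom A H.subtype).obj X) ≫ coev coinvG adjCoinvG X := by
    intro q
    erw [Category.assoc, comp_coev]
  rw [Finset.sum_congr rfl (fun q _ => key q), Finset.sum_const, Finset.card_univ,
    index_smul_cancel hindex]

lemma alpha_EInv (X : GRep A G) :
    alphaApp invG adjInvG invH adjInvH X ≫ EInv hindex invH adjInvH X = ev invG adjInvG X := by
  unfold EInv
  rw [Linear.comp_smul, Preadditive.comp_sum]
  have key : ∀ q : G ⧸ H,
      alphaApp invG adjInvG invH adjInvH X ≫
        (ev invH adjInvH ((resHom A H.subtype).obj X) ≫ X.map (hom q.out)) =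
      ev invG adjInvG X := by
    intro q
    erw [← Category.assoc,
      show alphaApp invG adjInvG invH adjInvH X ≫ ev invH adjInvH ((resHom A H.subtype).obj X) =
        ev invG adjInvG X from lift_ev _ _ _ _ _, ev_comp]
  rw [Finset.sum_congr rfl (fun q _ => key q), Finset.sum_const, Finset.card_univ,
    index_smul_cancel hindex]

lemma tau_ev (X : GRep A G) :
    tauApp hindex invG adjInvG invH adjInvH X ≫ ev invG adjInvG X =
      EInv hindex invH adjInvH X :=
  lift_ev _ _ _ _ _

lemma alpha_ev (X : GRep A G) :
    alphaApp invG adjInvG invH adjInvH X ≫ ev invH adjInvH ((resHom A H.subtype).obj X) =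
      ev invG adjInvG X :=
  lift_ev _ _ _ _ _

lemma coev_mCo (X : GRep A G) :
    coev coinvH adjCoinvH ((resHom A H.subtype).obj X) ≫
      mCo coinvG adjCoinvG coinvH adjCoinvH X = coev coinvG adjCoinvG X :=
  coev_colift _ _ _ _ _

end Main2

section NatHelpers

variable {A : Type u} [Category.{v} A] {M : Type*} [Monoid M]

lemma ev_naturality (inv : GRep A M ⥤ A) (adj : trivialRep A M ⊣ inv) {X Y : GRep A M}
    (f : X ⟶ Y) :
    inv.map f ≫ ev inv adj Y = ev inv adj X ≫ f.app (SingleObj.star M) := by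
  have h := congrArg (fun t => NatTrans.app t (SingleObj.star M)) (adj.counit.naturality f)
  simp only [NatTrans.comp_app, Functor.comp_map, Functor.const_map_app, Functor.id_map] at h
  exact h

lemma coev_naturality (coinv : GRep A M ⥤ A) (adj : coinv ⊣ trivialRep A M) {X Y : GRep A M}
    (f : X ⟶ Y) :
    f.app (SingleObj.star M) ≫ coev coinv adj Y = coev coinv adj X ≫ coinv.map f := by
  have h := congrArg (fun t => NatTrans.app t (SingleObj.star M)) (adj.unit.naturality f)
  simp only [NatTrans.comp_app, Functor.comp_map, Functor.const_map_app, Functor.id_map] at h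
  exact h

end NatHelpers

section Main3

variable {k : Type*} [Field k] {A : Type u} [Category.{v} A] [Abelian A] [Linear k A]
  {G : Type*} [Group G] [Finite G] {H : Subgroup G}
  (hindex : IsUnit ((H.index : k)))
  (invG : GRep A G ⥤ A) (adjInvG : trivialRep A G ⊣ invG)
  (coinvG : GRep A G ⥤ A) (adjCoinvG : coinvG ⊣ trivialRep A G)
  (invH : GRep A H ⥤ A) (adjInvH : trivialRep A H ⊣ invH)
  (coinvH : GRep A H ⥤ A) (adjCoinvH : coinvH ⊣ trivialRep A H)

noncomputable local instance : Fintype (G ⧸ H) := Fintype.ofFinite _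

lemma EInv_natural {X Y : GRep A G} (f : X ⟶ Y) :
    EInv hindex invH adjInvH X ≫ f.app (SingleObj.star G) =
      invH.map ((resHom A H.subtype).map f) ≫ EInv hindex invH adjInvH Y := by
  unfold EInv
  rw [Linear.smul_comp, Linear.comp_smul]
  congr 1
  rw [Preadditive.sum_comp, Preadditive.comp_sum]
  refine Finset.sum_congr rfl fun q _ => ?_
  calc (ev invH adjInvH ((resHom A H.subtype).obj X) ≫ X.map (hom q.out)) ≫
        f.app (SingleObj.star G)
      = ev invH adjInvH ((resHom A H.subtype).obj X) ≫
          (X.map (hom q.out) ≫ f.app (SingleObj.star G)) := Category.assoc _ _ _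
    _ = ev invH adjInvH ((resHom A H.subtype).obj X) ≫
          (f.app (SingleObj.star G) ≫ Y.map (hom q.out)) := by erw [f.naturality (hom q.out)]; rfl
    _ = (ev invH adjInvH ((resHom A H.subtype).obj X) ≫ f.app (SingleObj.star G)) ≫
          Y.map (hom q.out) := (Category.assoc _ _ _).symm
    _ = (invH.map ((resHom A H.subtype).map f) ≫
          ev invH adjInvH ((resHom A H.subtype).obj Y)) ≫ Y.map (hom q.out) := by
        erw [show invH.map ((resHom A H.subtype).map f) ≫
            ev invH adjInvH ((resHom A H.subtype).obj Y) =
            ev invH adjInvH ((resHom A H.subtype).obj X) ≫ f.app (SingleObj.star G) from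
          ev_naturality invH adjInvH ((resHom A H.subtype).map f)]
        rfl
    _ = invH.map ((resHom A H.subtype).map f) ≫
          (ev invH adjInvH ((resHom A H.subtype).obj Y) ≫ Y.map (hom q.out)) :=
        Category.assoc _ _ _

lemma alpha_natural {X Y : GRep A G} (f : X ⟶ Y) :
    alphaApp invG adjInvG invH adjInvH X ≫ invH.map ((resHom A H.subtype).map f) =
      invG.map f ≫ alphaApp invG adjInvG invH adjInvH Y := by
  apply hom_ext_inv invH adjInvH
  rw [Category.assoc, Category.assoc,
    ev_naturality invH adjInvH ((resHom A H.subtype).map f),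
    show alphaApp invG adjInvG invH adjInvH Y ≫
        ev invH adjInvH ((resHom A H.subtype).obj Y) = ev invG adjInvG Y from
      alpha_ev invG adjInvG invH adjInvH Y,
    ← Category.assoc,
    show alphaApp invG adjInvG invH adjInvH X ≫
        ev invH adjInvH ((resHom A H.subtype).obj X) = ev invG adjInvG X from
      alpha_ev invG adjInvG invH adjInvH X]
  erw [ev_naturality invG adjInvG f]
  rfl

lemma tau_natural {X Y : GRep A G} (f : X ⟶ Y) :
    tauApp hindex invG adjInvG invH adjInvH X ≫ invG.map f =
      invH.map ((resHom A H.subtype).map f) ≫ tauApp hindex invG adjInvG invH adjInvH Y := by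
  apply hom_ext_inv invG adjInvG
  rw [Category.assoc, Category.assoc, ev_naturality invG adjInvG f, ← Category.assoc,
    tau_ev hindex invG adjInvG invH adjInvH X,
    tau_ev hindex invG adjInvG invH adjInvH Y]
  exact EInv_natural hindex invH adjInvH f

end Main3

section Main4

variable {k : Type*} [Field k] {A : Type u} [Category.{v} A] [Abelian A] [Linear k A]
  {G : Type*} [Group G] [Finite G] {H : Subgroup G}
  (hindex : IsUnit ((H.index : k)))
  (invG : GRep A G ⥤ A) (adjInvG : trivialRep A G ⊣ invG)
  (coinvG : GRep A G ⥤ A) (adjCoinvG : coinvG ⊣ trivialRep A G)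
  (invH : GRep A H ⥤ A) (adjInvH : trivialRep A H ⊣ invH)
  (coinvH : GRep A H ⥤ A) (adjCoinvH : coinvH ⊣ trivialRep A H)
  (TrivG : GRep A G ⥤ A) (pG : invG ⟶ TrivG) (iG : TrivG ⟶ coinvG)
  (TrivH : GRep A H ⥤ A) (pH : invH ⟶ TrivH) (iH : TrivH ⟶ coinvH)

lemma hfacG' (hfacG : ∀ X, pG.app X ≫ iG.app X =
      (adjInvG.counit.app X ≫ adjCoinvG.unit.app X).app (SingleObj.star G))
    (X : GRep A G) :
    pG.app X ≫ iG.app X = ev invG adjInvG X ≫ coev coinvG adjCoinvG X := by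
  rw [hfacG X]; rfl

lemma hfacH' (hfacH : ∀ Y, pH.app Y ≫ iH.app Y =
      (adjInvH.counit.app Y ≫ adjCoinvH.unit.app Y).app (SingleObj.star H))
    (Y : GRep A H) :
    pH.app Y ≫ iH.app Y = ev invH adjInvH Y ≫ coev coinvH adjCoinvH Y := by
  rw [hfacH Y]; rfl

lemma alpha_pH_iH
    (hfacG : ∀ X, pG.app X ≫ iG.app X =
      (adjInvG.counit.app X ≫ adjCoinvG.unit.app X).app (SingleObj.star G))
    (hfacH : ∀ Y, pH.app Y ≫ iH.app Y =
      (adjInvH.counit.app Y ≫ adjCoinvH.unit.app Y).app (SingleObj.star H))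
    (X : GRep A G) :
    alphaApp invG adjInvG invH adjInvH X ≫ pH.app ((resHom A H.subtype).obj X) ≫
      iH.app ((resHom A H.subtype).obj X) =
    pG.app X ≫ iG.app X ≫ tcCo hindex coinvG adjCoinvG coinvH adjCoinvH X := by
  erw [hfacH' invH adjInvH coinvH adjCoinvH TrivH pH iH hfacH, ← Category.assoc,
    alpha_ev invG adjInvG invH adjInvH X, ev_coev_H hindex invG adjInvG coinvG adjCoinvG
      coinvH adjCoinvH X, ← Category.assoc,
    ← hfacG' invG adjInvG coinvG adjCoinvG TrivG pG iG hfacG X, Category.assoc]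

lemma tau_pG_iG
    (hfacG : ∀ X, pG.app X ≫ iG.app X =
      (adjInvG.counit.app X ≫ adjCoinvG.unit.app X).app (SingleObj.star G))
    (hfacH : ∀ Y, pH.app Y ≫ iH.app Y =
      (adjInvH.counit.app Y ≫ adjCoinvH.unit.app Y).app (SingleObj.star H))
    (X : GRep A G) :
    tauApp hindex invG adjInvG invH adjInvH X ≫ pG.app X ≫ iG.app X =
    pH.app ((resHom A H.subtype).obj X) ≫ iH.app ((resHom A H.subtype).obj X) ≫
      mCo coinvG adjCoinvG coinvH adjCoinvH X := by
  rw [hfacG' invG adjInvG coinvG adjCoinvG TrivG pG iG hfacG, ← Category.assoc,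
    tau_ev hindex invG adjInvG invH adjInvH X,
    EInv_coev hindex coinvG adjCoinvG invH adjInvH X,
    ← coev_mCo coinvG adjCoinvG coinvH adjCoinvH X, ← Category.assoc,
    ← hfacH' invH adjInvH coinvH adjCoinvH TrivH pH iH hfacH, Category.assoc]

/-- The section `Triv_G X → Triv_H (Res X)`. -/
noncomputable def sApp
    (hpG : ∀ X, Epi (pG.app X)) (hiH : ∀ Y, Mono (iH.app Y))
    (hfacG : ∀ X, pG.app X ≫ iG.app X =
      (adjInvG.counit.app X ≫ adjCoinvG.unit.app X).app (SingleObj.star G))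
    (hfacH : ∀ Y, pH.app Y ≫ iH.app Y =
      (adjInvH.counit.app Y ≫ adjCoinvH.unit.app Y).app (SingleObj.star H))
    (X : GRep A G) :
    TrivG.obj X ⟶ TrivH.obj ((resHom A H.subtype).obj X) :=
  letI := hpG X
  Abelian.epiDesc (pG.app X)
    (alphaApp invG adjInvG invH adjInvH X ≫ pH.app ((resHom A H.subtype).obj X))
    (by
      letI := hiH ((resHom A H.subtype).obj X)
      rw [← cancel_mono (iH.app ((resHom A H.subtype).obj X)), zero_comp, Category.assoc,
        Category.assoc, alpha_pH_iH hindex invG adjInvG coinvG adjCoinvG invH adjInvH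
          coinvH adjCoinvH TrivG pG iG TrivH pH iH hfacG hfacH X, ← Category.assoc,
        kernel.condition, zero_comp])

lemma pG_sApp (hpG : ∀ X, Epi (pG.app X)) (hiH : ∀ Y, Mono (iH.app Y))
    (hfacG : ∀ X, pG.app X ≫ iG.app X =
      (adjInvG.counit.app X ≫ adjCoinvG.unit.app X).app (SingleObj.star G))
    (hfacH : ∀ Y, pH.app Y ≫ iH.app Y =
      (adjInvH.counit.app Y ≫ adjCoinvH.unit.app Y).app (SingleObj.star H))
    (X : GRep A G) :
    pG.app X ≫ sApp hindex invG adjInvG coinvG adjCoinvG invH adjInvH coinvH adjCoinvH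
        TrivG pG iG TrivH pH iH hpG hiH hfacG hfacH X =
      alphaApp invG adjInvG invH adjInvH X ≫ pH.app ((resHom A H.subtype).obj X) := by
  letI := hpG X
  unfold sApp
  exact Abelian.comp_epiDesc _ _ _

/-- The retraction `Triv_H (Res X) → Triv_G X`. -/
noncomputable def rApp
    (hiG : ∀ X, Mono (iG.app X)) (hpH : ∀ Y, Epi (pH.app Y))
    (hfacG : ∀ X, pG.app X ≫ iG.app X =
      (adjInvG.counit.app X ≫ adjCoinvG.unit.app X).app (SingleObj.star G))
    (hfacH : ∀ Y, pH.app Y ≫ iH.app Y =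
      (adjInvH.counit.app Y ≫ adjCoinvH.unit.app Y).app (SingleObj.star H))
    (X : GRep A G) :
    TrivH.obj ((resHom A H.subtype).obj X) ⟶ TrivG.obj X :=
  letI := hpH ((resHom A H.subtype).obj X)
  Abelian.epiDesc (pH.app ((resHom A H.subtype).obj X))
    (tauApp hindex invG adjInvG invH adjInvH X ≫ pG.app X)
    (by
      letI := hiG X
      rw [← cancel_mono (iG.app X), zero_comp, Category.assoc, Category.assoc,
        tau_pG_iG hindex invG adjInvG coinvG adjCoinvG invH adjInvH coinvH adjCoinvH
          TrivG pG iG TrivH pH iH hfacG hfacH X, ← Category.assoc,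
        kernel.condition, zero_comp])

lemma pH_rApp (hiG : ∀ X, Mono (iG.app X)) (hpH : ∀ Y, Epi (pH.app Y))
    (hfacG : ∀ X, pG.app X ≫ iG.app X =
      (adjInvG.counit.app X ≫ adjCoinvG.unit.app X).app (SingleObj.star G))
    (hfacH : ∀ Y, pH.app Y ≫ iH.app Y =
      (adjInvH.counit.app Y ≫ adjCoinvH.unit.app Y).app (SingleObj.star H))
    (X : GRep A G) :
    pH.app ((resHom A H.subtype).obj X) ≫
      rApp hindex invG adjInvG coinvG adjCoinvG invH adjInvH coinvH adjCoinvH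
        TrivG pG iG TrivH pH iH hiG hpH hfacG hfacH X =
      tauApp hindex invG adjInvG invH adjInvH X ≫ pG.app X := by
  letI := hpH ((resHom A H.subtype).obj X)
  unfold rApp
  exact Abelian.comp_epiDesc _ _ _

end Main4

section Main5

variable {k : Type*} [Field k] {A : Type u} [Category.{v} A] [Abelian A] [Linear k A]
  {G : Type*} [Group G] [Finite G] {H : Subgroup G}
  (hindex : IsUnit ((H.index : k)))
  (invG : GRep A G ⥤ A) (adjInvG : trivialRep A G ⊣ invG)
  (coinvG : GRep A G ⥤ A) (adjCoinvG : coinvG ⊣ trivialRep A G)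
  (invH : GRep A H ⥤ A) (adjInvH : trivialRep A H ⊣ invH)
  (coinvH : GRep A H ⥤ A) (adjCoinvH : coinvH ⊣ trivialRep A H)
  (TrivG : GRep A G ⥤ A) (pG : invG ⟶ TrivG) (iG : TrivG ⟶ coinvG)
  (TrivH : GRep A H ⥤ A) (pH : invH ⟶ TrivH) (iH : TrivH ⟶ coinvH)
  (hpG : ∀ X, Epi (pG.app X)) (hiG : ∀ X, Mono (iG.app X))
  (hpH : ∀ Y, Epi (pH.app Y)) (hiH : ∀ Y, Mono (iH.app Y))
  (hfacG : ∀ X, pG.app X ≫ iG.app X =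
    (adjInvG.counit.app X ≫ adjCoinvG.unit.app X).app (SingleObj.star G))
  (hfacH : ∀ Y, pH.app Y ≫ iH.app Y =
    (adjInvH.counit.app Y ≫ adjCoinvH.unit.app Y).app (SingleObj.star H))

lemma s_natural {X Y : GRep A G} (f : X ⟶ Y) :
    TrivG.map f ≫ sApp hindex invG adjInvG coinvG adjCoinvG invH adjInvH coinvH adjCoinvH
        TrivG pG iG TrivH pH iH hpG hiH hfacG hfacH Y =
      sApp hindex invG adjInvG coinvG adjCoinvG invH adjInvH coinvH adjCoinvH
        TrivG pG iG TrivH pH iH hpG hiH hfacG hfacH X ≫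
        TrivH.map ((resHom A H.subtype).map f) := by
  letI := hpG X
  rw [← cancel_epi (pG.app X)]
  calc pG.app X ≫ TrivG.map f ≫ sApp hindex invG adjInvG coinvG adjCoinvG invH adjInvH
        coinvH adjCoinvH TrivG pG iG TrivH pH iH hpG hiH hfacG hfacH Y
      = invG.map f ≫ pG.app Y ≫ sApp hindex invG adjInvG coinvG adjCoinvG invH adjInvH
          coinvH adjCoinvH TrivG pG iG TrivH pH iH hpG hiH hfacG hfacH Y := by
        rw [← Category.assoc, ← pG.naturality f, Category.assoc]
    _ = invG.map f ≫ alphaApp invG adjInvG invH adjInvH Y ≫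
          pH.app ((resHom A H.subtype).obj Y) := by
        rw [pG_sApp hindex invG adjInvG coinvG adjCoinvG invH adjInvH coinvH adjCoinvH
          TrivG pG iG TrivH pH iH hpG hiH hfacG hfacH Y]
    _ = alphaApp invG adjInvG invH adjInvH X ≫ invH.map ((resHom A H.subtype).map f) ≫
          pH.app ((resHom A H.subtype).obj Y) := by
        rw [← Category.assoc, ← alpha_natural invG adjInvG invH adjInvH f, Category.assoc]
    _ = alphaApp invG adjInvG invH adjInvH X ≫ pH.app ((resHom A H.subtype).obj X) ≫
          TrivH.map ((resHom A H.subtype).map f) := by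
        rw [pH.naturality ((resHom A H.subtype).map f)]
    _ = pG.app X ≫ sApp hindex invG adjInvG coinvG adjCoinvG invH adjInvH coinvH adjCoinvH
          TrivG pG iG TrivH pH iH hpG hiH hfacG hfacH X ≫
          TrivH.map ((resHom A H.subtype).map f) := by
        rw [← Category.assoc, ← pG_sApp hindex invG adjInvG coinvG adjCoinvG invH adjInvH
          coinvH adjCoinvH TrivG pG iG TrivH pH iH hpG hiH hfacG hfacH X, Category.assoc]

lemma r_natural {X Y : GRep A G} (f : X ⟶ Y) :
    TrivH.map ((resHom A H.subtype).map f) ≫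
        rApp hindex invG adjInvG coinvG adjCoinvG invH adjInvH coinvH adjCoinvH
          TrivG pG iG TrivH pH iH hiG hpH hfacG hfacH Y =
      rApp hindex invG adjInvG coinvG adjCoinvG invH adjInvH coinvH adjCoinvH
        TrivG pG iG TrivH pH iH hiG hpH hfacG hfacH X ≫ TrivG.map f := by
  letI := hpH ((resHom A H.subtype).obj X)
  rw [← cancel_epi (pH.app ((resHom A H.subtype).obj X))]
  calc pH.app ((resHom A H.subtype).obj X) ≫ TrivH.map ((resHom A H.subtype).map f) ≫
        rApp hindex invG adjInvG coinvG adjCoinvG invH adjInvH coinvH adjCoinvH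
          TrivG pG iG TrivH pH iH hiG hpH hfacG hfacH Y
      = invH.map ((resHom A H.subtype).map f) ≫ pH.app ((resHom A H.subtype).obj Y) ≫
          rApp hindex invG adjInvG coinvG adjCoinvG invH adjInvH coinvH adjCoinvH
            TrivG pG iG TrivH pH iH hiG hpH hfacG hfacH Y := by
        rw [← Category.assoc, ← pH.naturality ((resHom A H.subtype).map f), Category.assoc]
    _ = invH.map ((resHom A H.subtype).map f) ≫
          tauApp hindex invG adjInvG invH adjInvH Y ≫ pG.app Y := by
        rw [pH_rApp hindex invG adjInvG coinvG adjCoinvG invH adjInvH coinvH adjCoinvH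
          TrivG pG iG TrivH pH iH hiG hpH hfacG hfacH Y]
    _ = tauApp hindex invG adjInvG invH adjInvH X ≫ invG.map f ≫ pG.app Y := by
        rw [← Category.assoc, ← tau_natural hindex invG adjInvG invH adjInvH f,
          Category.assoc]
    _ = tauApp hindex invG adjInvG invH adjInvH X ≫ pG.app X ≫ TrivG.map f := by
        rw [pG.naturality f]
    _ = pH.app ((resHom A H.subtype).obj X) ≫
          rApp hindex invG adjInvG coinvG adjCoinvG invH adjInvH coinvH adjCoinvH
            TrivG pG iG TrivH pH iH hiG hpH hfacG hfacH X ≫ TrivG.map f := by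
        rw [← Category.assoc, ← pH_rApp hindex invG adjInvG coinvG adjCoinvG invH adjInvH
          coinvH adjCoinvH TrivG pG iG TrivH pH iH hiG hpH hfacG hfacH X, Category.assoc]

lemma s_r (X : GRep A G) :
    sApp hindex invG adjInvG coinvG adjCoinvG invH adjInvH coinvH adjCoinvH
        TrivG pG iG TrivH pH iH hpG hiH hfacG hfacH X ≫
      rApp hindex invG adjInvG coinvG adjCoinvG invH adjInvH coinvH adjCoinvH
        TrivG pG iG TrivH pH iH hiG hpH hfacG hfacH X = 𝟙 (TrivG.obj X) := by
  letI := hpG X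
  letI := hiG X
  rw [← cancel_epi (pG.app X), Category.comp_id, ← Category.assoc,
    pG_sApp hindex invG adjInvG coinvG adjCoinvG invH adjInvH coinvH adjCoinvH
      TrivG pG iG TrivH pH iH hpG hiH hfacG hfacH X, Category.assoc,
    pH_rApp hindex invG adjInvG coinvG adjCoinvG invH adjInvH coinvH adjCoinvH
      TrivG pG iG TrivH pH iH hiG hpH hfacG hfacH X]
  -- ⊢ alphaApp ≫ tauApp ≫ pG.app X = pG.app X
  rw [← cancel_mono (iG.app X), Category.assoc, Category.assoc,
    hfacG' invG adjInvG coinvG adjCoinvG TrivG pG iG hfacG X, ← Category.assoc,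
    ← Category.assoc, Category.assoc (alphaApp invG adjInvG invH adjInvH X),
    tau_ev hindex invG adjInvG invH adjInvH X,
    alpha_EInv hindex invG adjInvG invH adjInvH X]

end Main5
end Stmt6Aux

/-- Let `A` be a `k`-linear abelian category, `G` a finite group, `H ≤ G` with
`|G : H|` invertible in `k`.  Given the invariants and coinvariants functors for `G`
and `H`, and the functors `Triv_G`, `Triv_H` exhibited as the images of the canonical
natural transformations `H^0 → H_0` (an epi onto `Triv` followed by a mono into the
coinvariants, composing to the canonical map), the functor `Triv_G` is a direct summand
of `Triv_H ∘ Res^G_H` as functors `Rep(G,A) → A`. -/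
theorem stmt_6 {k : Type*} [Field k] {A : Type u} [Category.{v} A] [Abelian A] [Linear k A]
    (G : Type*) [Group G] [Finite G] (H : Subgroup G)
    (hindex : IsUnit (H.index : k))
    (invG : GRep A G ⥤ A) (adjInvG : trivialRep A G ⊣ invG)
    (coinvG : GRep A G ⥤ A) (adjCoinvG : coinvG ⊣ trivialRep A G)
    (invH : GRep A H ⥤ A) (adjInvH : trivialRep A H ⊣ invH)
    (coinvH : GRep A H ⥤ A) (adjCoinvH : coinvH ⊣ trivialRep A H)
    (TrivG : GRep A G ⥤ A) (pG : invG ⟶ TrivG) (iG : TrivG ⟶ coinvG)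
    (hpG : ∀ X, Epi (pG.app X)) (hiG : ∀ X, Mono (iG.app X))
    (hfacG : ∀ X, pG.app X ≫ iG.app X =
      (adjInvG.counit.app X ≫ adjCoinvG.unit.app X).app (SingleObj.star G))
    (TrivH : GRep A H ⥤ A) (pH : invH ⟶ TrivH) (iH : TrivH ⟶ coinvH)
    (hpH : ∀ X, Epi (pH.app X)) (hiH : ∀ X, Mono (iH.app X))
    (hfacH : ∀ X, pH.app X ≫ iH.app X =
      (adjInvH.counit.app X ≫ adjCoinvH.unit.app X).app (SingleObj.star H)) :
    ∃ (s : TrivG ⟶ resHom A H.subtype ⋙ TrivH) (r : resHom A H.subtype ⋙ TrivH ⟶ TrivG),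
      s ≫ r = 𝟙 TrivG := by
  refine ⟨{ app := fun X => Stmt6Aux.sApp hindex invG adjInvG coinvG adjCoinvG invH adjInvH
              coinvH adjCoinvH TrivG pG iG TrivH pH iH hpG hiH hfacG hfacH X
            naturality := fun X Y f => Stmt6Aux.s_natural hindex invG adjInvG coinvG adjCoinvG
              invH adjInvH coinvH adjCoinvH TrivG pG iG TrivH pH iH hpG hiH hfacG hfacH f },
          { app := fun X => Stmt6Aux.rApp hindex invG adjInvG coinvG adjCoinvG invH adjInvH
              coinvH adjCoinvH TrivG pG iG TrivH pH iH hiG hpH hfacG hfacH X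
            naturality := fun X Y f => Stmt6Aux.r_natural hindex invG adjInvG coinvG adjCoinvG
              invH adjInvH coinvH adjCoinvH TrivG pG iG TrivH pH iH hiG hpH hfacG hfacH f }, ?_⟩
  ext X
  exact Stmt6Aux.s_r hindex invG adjInvG coinvG adjCoinvG invH adjInvH coinvH adjCoinvH
    TrivG pG iG TrivH pH iH hpG hiG hpH hiH hfacG hfacH X
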